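/- Let G be a finite simple graph with at least two vertices and let S be a lexicographically optimal star partition of G with a designated center for each part. Suppose A_1, A_2, …, A_r are pairwise distinct parts of S such that |A_1| = σ(G) + 1 and, for every j ∈ {1,…,r−1}, some leaf of A_j is adjacent in G to the designated center of A_{j+1}. Then |A_r| ≥ σ(G). -/
import Mathlib


/-- A star partition of `G`. -/
def IsStarPartition {V : Type*} [Fintype V] [DecidableEq V] (G : SimpleGraph V)
    (P : Finset (Finset V)) : Prop :=
  (∀ v : V, ∃! S : Finset V, S ∈ P ∧ v ∈ S) ∧
  (∀ S ∈ P, 2 ≤ S.card) ∧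
  (∀ S ∈ P, ∃ c ∈ S, ∀ v ∈ S, v ≠ c → G.Adj c v)

/-- The star partition width `σ(G)`: the smallest `k` such that `G` has a
`k`-star partition. -/
noncomputable def starPartitionWidth {V : Type*} [Fintype V] [DecidableEq V]
    (G : SimpleGraph V) : ℕ :=
  sInf {k : ℕ | ∃ P : Finset (Finset V), IsStarPartition G P ∧ ∀ S ∈ P, S.card ≤ k + 1}

/-- A star partition of `G` together with a designated center for each part. -/
def IsCenteredStarPartition {V : Type*} [Fintype V] [DecidableEq V] (G : SimpleGraph V)
    (P : Finset (Finset V)) (center : Finset V → V) : Prop :=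
  (∀ v : V, ∃! S : Finset V, S ∈ P ∧ v ∈ S) ∧
  (∀ S ∈ P, 2 ≤ S.card) ∧
  (∀ S ∈ P, center S ∈ S ∧ ∀ v ∈ S, v ≠ center S → G.Adj (center S) v)

/-- `starCounts P i` is the number of parts of `P` which are `i`-stars,
i.e. have exactly `i + 1` vertices. -/
def starCounts {V : Type*} [DecidableEq V] (P : Finset (Finset V)) : ℕ → ℕ :=
  fun i => (P.filter (fun S => S.card = i + 1)).card

/-- Lexicographic comparison of star-count sequences, read from large star sizes
downwards (the counts vanish above `Δ(G)`, so this is the comparison of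
`(s_Δ, s_{Δ-1}, …, s_1)`). -/
def LexLE (s t : ℕ → ℕ) : Prop :=
  s = t ∨ ∃ i : ℕ, s i < t i ∧ ∀ j : ℕ, i < j → s j = t j

lemma starCounts_def {V : Type*} [DecidableEq V] (P : Finset (Finset V)) (i : ℕ) :
    starCounts P i = (P.filter (fun S => S.card = i + 1)).card := rfl

/-- Let `A 0, A 1, …, A (r-1)` be pairwise distinct parts of a
lexicographically optimal star partition such that `A 0` is a `σ(G)`-star (it has
`σ(G) + 1` vertices) and, for each consecutive pair, some leaf of `A j` is adjacent in
`G` to the designated center of `A (j+1)`. Then the last part has at least `σ(G)`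
vertices. -/
theorem stmt11 {V : Type*} [Fintype V] [DecidableEq V] (G : SimpleGraph V)
    (h2 : 2 ≤ Fintype.card V)
    (P : Finset (Finset V)) (center : Finset V → V)
    (hP : IsCenteredStarPartition G P center)
    (hopt : ∀ Q : Finset (Finset V), IsStarPartition G Q →
      LexLE (starCounts P) (starCounts Q))
    (r : ℕ) (hr : 0 < r) (A : Fin r → Finset V)
    (hinj : Function.Injective A) (hmem : ∀ j : Fin r, A j ∈ P)
    (hfirst : (A ⟨0, hr⟩).card = starPartitionWidth G + 1)
    (hpath : ∀ j : ℕ, ∀ h : j + 1 < r,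
      ∃ x ∈ A ⟨j, by omega⟩, x ≠ center (A ⟨j, by omega⟩) ∧
        G.Adj x (center (A ⟨j + 1, h⟩))) :
    starPartitionWidth G ≤ (A ⟨r - 1, by omega⟩).card := by
  classical
  by_contra hcon
  push_neg at hcon
  set σ := starPartitionWidth G with hσdef
  have hPstar : IsStarPartition G P :=
    ⟨hP.1, hP.2.1, fun S hS => ⟨center S, (hP.2.2 S hS).1, (hP.2.2 S hS).2⟩⟩
  have hdisj : ∀ {S T : Finset V} {v : V}, S ∈ P → T ∈ P → v ∈ S → v ∈ T → S = T := by
    intro S T v hS hT hvS hvT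
    obtain ⟨U, -, hU⟩ := hP.1 v
    rw [hU S ⟨hS, hvS⟩, hU T ⟨hT, hvT⟩]
  -- reformulate `A` as a function on ℕ
  obtain ⟨A', hA'eq⟩ : ∃ A' : ℕ → Finset V, ∀ j (h : j < r), A' j = A ⟨j, h⟩ :=
    ⟨fun j => if h : j < r then A ⟨j, h⟩ else ∅, fun j h => dif_pos h⟩
  have hA'mem : ∀ j, j < r → A' j ∈ P := fun j h => by rw [hA'eq j h]; exact hmem _
  have hA'inj : ∀ j k, j < r → k < r → A' j = A' k → j = k := by
    intro j k hj hk h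
    rw [hA'eq j hj, hA'eq k hk] at h
    exact congrArg Fin.val (hinj h)
  have hA'disj : ∀ j k, j < r → k < r → ∀ v, v ∈ A' j → v ∈ A' k → j = k :=
    fun j k hj hk v hvj hvk =>
      hA'inj j k hj hk (hdisj (hA'mem j hj) (hA'mem k hk) hvj hvk)
  have hlast : (A' (r-1)).card < σ := by
    rw [hA'eq (r-1) (by omega)]; exact hcon
  have hfirst' : (A' 0).card = σ + 1 := by
    rw [hA'eq 0 hr]; exact hfirst
  have hr2 : 2 ≤ r := by
    by_contra h
    have h1 : r = 1 := by omega
    rw [h1] at hlast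
    have h0 : (1:ℕ) - 1 = 0 := rfl
    rw [h0] at hlast
    omega
  have hσ3 : 3 ≤ σ := by
    have := hP.2.1 _ (hA'mem (r-1) (by omega))
    omega
  -- there is a partition of width σ
  obtain ⟨Q, hQstar, hQle⟩ :
      ∃ Q : Finset (Finset V), IsStarPartition G Q ∧ ∀ S ∈ Q, S.card ≤ σ + 1 := by
    have hne : {k : ℕ | ∃ P' : Finset (Finset V),
        IsStarPartition G P' ∧ ∀ S ∈ P', S.card ≤ k + 1}.Nonempty :=
      ⟨Fintype.card V, ⟨P, hPstar,
        fun S _ => le_trans (Finset.card_le_univ S) (Nat.le_succ _)⟩⟩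
    rw [hσdef]
    exact Nat.sInf_mem hne
  have hQzero : ∀ i, σ < i → starCounts Q i = 0 := by
    intro i hi
    rw [starCounts_def, Finset.card_eq_zero, Finset.filter_eq_empty_iff]
    intro S hS hc
    have := hQle S hS
    omega
  -- Fact A: all parts of P have card ≤ σ + 1
  have hPle : ∀ S ∈ P, S.card ≤ σ + 1 := by
    intro S hS
    by_contra hgt
    push_neg at hgt
    have h2S := hP.2.1 S hS
    have hpos : 0 < starCounts P (S.card - 1) := by
      rw [starCounts_def]
      exact Finset.card_pos.2 ⟨S, Finset.mem_filter.2 ⟨hS, by omega⟩⟩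
    rcases hopt Q hQstar with heq | ⟨i, hlt, hag⟩
    · rw [heq, hQzero _ (by omega)] at hpos; omega
    · rcases Nat.lt_or_ge i (S.card - 1) with h | h
      · rw [hag (S.card - 1) h, hQzero _ (by omega)] at hpos; omega
      · have hne : (Q.filter (fun S => S.card = i + 1)).card ≠ 0 := by
          rw [← starCounts_def]; omega
        obtain ⟨T, hT⟩ := Finset.card_pos.1 (Nat.pos_of_ne_zero hne)
        obtain ⟨hTQ, hTc⟩ := Finset.mem_filter.1 hT
        have := hQle T hTQ
        omega
  -- the chosen leaves
  have hVne : Nonempty V := Fintype.card_pos_iff.mp (by omega)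
  obtain ⟨x, hx⟩ : ∃ x : ℕ → V, ∀ j, j + 1 < r →
      x j ∈ A' j ∧ x j ≠ center (A' j) ∧ G.Adj (x j) (center (A' (j+1))) := by
    refine ⟨fun j => if h : j + 1 < r then (hpath j h).choose else hVne.some, ?_⟩
    intro j h
    simp only [dif_pos h]
    obtain ⟨h1, h2, h3⟩ := (hpath j h).choose_spec
    rw [hA'eq j (by omega), hA'eq (j+1) h]
    exact ⟨h1, h2, h3⟩
  have hx1 : ∀ j, j + 1 < r → x j ∈ A' j := fun j h => (hx j h).1
  have hx2 : ∀ j, j + 1 < r → x j ≠ center (A' j) := fun j h => (hx j h).2.1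
  have hx3 : ∀ j, j + 1 < r → G.Adj (x j) (center (A' (j+1))) := fun j h => (hx j h).2.2
  -- the shifted parts
  obtain ⟨B, hBdef⟩ : ∃ B : ℕ → Finset V, ∀ j,
      B j = (if j + 1 < r then (A' j).erase (x j) else A' j) ∪
        (if j = 0 then ∅ else {x (j-1)}) := ⟨_, fun _ => rfl⟩
  have hBmem : ∀ j v, v ∈ B j ↔
      ((v ∈ A' j ∧ (j + 1 < r → v ≠ x j)) ∨ (j ≠ 0 ∧ v = x (j-1))) := by
    intro j v
    rw [hBdef j, Finset.mem_union]
    split_ifs with h1 h0 h0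
    · subst h0
      simp only [Finset.mem_erase, Finset.notMem_empty, or_false]
      constructor
      · rintro ⟨hne, hm⟩; exact Or.inl ⟨hm, fun _ => hne⟩
      · rintro (⟨hm, himp⟩ | ⟨h, _⟩)
        · exact ⟨himp h1, hm⟩
        · exact absurd rfl h
    · simp only [Finset.mem_erase, Finset.mem_singleton]
      constructor
      · rintro (⟨hne, hm⟩ | he)
        exacts [Or.inl ⟨hm, fun _ => hne⟩, Or.inr ⟨h0, he⟩]
      · rintro (⟨hm, himp⟩ | ⟨_, he⟩)
        exacts [Or.inl ⟨himp h1, hm⟩, Or.inr he]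
    · subst h0
      simp only [Finset.notMem_empty, or_false]
      constructor
      · intro hm; exact Or.inl ⟨hm, fun hh => absurd hh h1⟩
      · rintro (⟨hm, _⟩ | ⟨hne, _⟩)
        exacts [hm, absurd rfl hne]
    · simp only [Finset.mem_singleton]
      constructor
      · rintro (hm | he)
        exacts [Or.inl ⟨hm, fun hh => absurd hh h1⟩, Or.inr ⟨h0, he⟩]
      · rintro (⟨hm, _⟩ | ⟨_, he⟩)
        exacts [Or.inl hm, Or.inr he]
  have hcB : ∀ j, j < r → center (A' j) ∈ B j := by
    intro j hj
    rw [hBmem]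
    exact Or.inl ⟨(hP.2.2 _ (hA'mem j hj)).1, fun h1 => (hx2 j h1).symm⟩
  have hBuniq : ∀ j k, j < r → k < r → ∀ v, v ∈ B j → v ∈ B k → j = k := by
    intro j k hj hk v hvj hvk
    rw [hBmem] at hvj hvk
    rcases hvj with ⟨hj1, hj2⟩ | ⟨hj0, hjx⟩ <;> rcases hvk with ⟨hk1, hk2⟩ | ⟨hk0, hkx⟩
    · exact hA'disj j k hj hk v hj1 hk1
    · exfalso
      have h1 : j = k - 1 :=
        hA'disj j (k-1) hj (by omega) v hj1 (hkx ▸ hx1 (k-1) (by omega))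
      exact hj2 (by omega) (by rw [hkx, h1])
    · exfalso
      have h1 : k = j - 1 :=
        hA'disj k (j-1) hk (by omega) v hk1 (hjx ▸ hx1 (j-1) (by omega))
      exact hk2 (by omega) (by rw [hjx, h1])
    · have := hA'disj (j-1) (k-1) (by omega) (by omega) v
        (hjx ▸ hx1 (j-1) (by omega)) (hkx ▸ hx1 (k-1) (by omega))
      omega
  -- card computations
  have hxnot : ∀ j, j ≠ 0 → j < r → x (j-1) ∉ A' j := by
    intro j h0 hj hm
    have := hA'disj (j-1) j (by omega) hj _ (hx1 (j-1) (by omega)) hm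
    omega
  have hcard0 : (B 0).card = σ := by
    rw [hBdef 0, if_pos (show 0 + 1 < r by omega), if_pos rfl, Finset.union_empty,
      Finset.card_erase_of_mem (hx1 0 (by omega)), hfirst']
    omega
  have hcardmid : ∀ j, j ≠ 0 → j + 1 < r → (B j).card = (A' j).card := by
    intro j h0 h1
    rw [hBdef j, if_pos h1, if_neg h0, Finset.union_comm, ← Finset.insert_eq,
      Finset.card_insert_of_notMem
        (fun hm => hxnot j h0 (by omega) (Finset.mem_of_mem_erase hm)),
      Finset.card_erase_of_mem (hx1 j h1)]
    have h2 := hP.2.1 _ (hA'mem j (by omega))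
    omega
  have hcardlast : (B (r-1)).card = (A' (r-1)).card + 1 := by
    rw [hBdef (r-1), if_neg (show ¬(r-1+1 < r) by omega),
      if_neg (show ¬(r-1 = 0) by omega), Finset.union_comm, ← Finset.insert_eq,
      Finset.card_insert_of_notMem (hxnot (r-1) (by omega) (by omega))]
  have hB_le : ∀ k, k < r → (B k).card ≤ σ + 1 := by
    intro k hk
    by_cases h0 : k = 0
    · subst h0; rw [hcard0]; omega
    by_cases h1 : k + 1 < r
    · rw [hcardmid k h0 h1]; exact hPle _ (hA'mem k hk)
    · have hk1 : k = r - 1 := by omega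
      subst hk1; rw [hcardlast]; omega
  have hB_ge : ∀ k, k < r → 2 ≤ (B k).card := by
    intro k hk
    by_cases h0 : k = 0
    · subst h0; rw [hcard0]; omega
    by_cases h1 : k + 1 < r
    · rw [hcardmid k h0 h1]; exact hP.2.1 _ (hA'mem k hk)
    · have hk1 : k = r - 1 := by omega
      subst hk1; rw [hcardlast]
      have := hP.2.1 _ (hA'mem (r-1) (by omega))
      omega
  -- the new partition
  set P' : Finset (Finset V) :=
    (P.filter (fun S => ∀ l, l < r → S ≠ A' l)) ∪ (Finset.range r).image B with hP'def
  have hP'mem : ∀ T, T ∈ P' ↔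
      ((T ∈ P ∧ ∀ l, l < r → T ≠ A' l) ∨ ∃ k, k < r ∧ T = B k) := by
    intro T
    rw [hP'def, Finset.mem_union, Finset.mem_filter, Finset.mem_image]
    constructor
    · rintro (⟨h1, h2⟩ | ⟨k, hk, hbk⟩)
      · exact Or.inl ⟨h1, h2⟩
      · exact Or.inr ⟨k, Finset.mem_range.1 hk, hbk.symm⟩
    · rintro (⟨h1, h2⟩ | ⟨k, hk, hbk⟩)
      · exact Or.inl ⟨h1, h2⟩
      · exact Or.inr ⟨k, Finset.mem_range.2 hk, hbk.symm⟩
  have hP'star : IsStarPartition G P' := by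
    refine ⟨?_, ?_, ?_⟩
    · intro v
      obtain ⟨S, ⟨hS, hvS⟩, hSu⟩ := hP.1 v
      by_cases hchain : ∃ j, j < r ∧ S = A' j
      · obtain ⟨j, hj, rfl⟩ := hchain
        by_cases hxj : j + 1 < r ∧ v = x j
        · have hmB : v ∈ B (j+1) := by
            rw [hBmem]
            exact Or.inr ⟨by omega, hxj.2⟩
          refine ⟨B (j+1), ⟨(hP'mem _).2 (Or.inr ⟨j+1, hxj.1, rfl⟩), hmB⟩, ?_⟩
          rintro T ⟨hT', hvT⟩
          rcases (hP'mem T).1 hT' with ⟨hTP, hTpred⟩ | ⟨k, hk, rfl⟩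
          · exact absurd (hdisj hTP (hA'mem j hj) hvT hvS) (hTpred j hj)
          · rw [hBuniq k (j+1) hk hxj.1 v hvT hmB]
        · have hmB : v ∈ B j := by
            rw [hBmem]
            exact Or.inl ⟨hvS, fun hh1 hh2 => hxj ⟨hh1, hh2⟩⟩
          refine ⟨B j, ⟨(hP'mem _).2 (Or.inr ⟨j, hj, rfl⟩), hmB⟩, ?_⟩
          rintro T ⟨hT', hvT⟩
          rcases (hP'mem T).1 hT' with ⟨hTP, hTpred⟩ | ⟨k, hk, rfl⟩
          · exact absurd (hdisj hTP (hA'mem j hj) hvT hvS) (hTpred j hj)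
          · rw [hBuniq k j hk hj v hvT hmB]
      · push_neg at hchain
        refine ⟨S, ⟨(hP'mem S).2 (Or.inl ⟨hS, hchain⟩), hvS⟩, ?_⟩
        rintro T ⟨hT', hvT⟩
        rcases (hP'mem T).1 hT' with ⟨hTP, _⟩ | ⟨k, hk, rfl⟩
        · exact hdisj hTP hS hvT hvS
        · exfalso
          rcases (hBmem k v).1 hvT with ⟨hv1, _⟩ | ⟨hk0, hvx⟩
          · exact hchain k hk (hdisj hS (hA'mem k hk) hvS hv1)
          · exact hchain (k-1) (by omega)
              (hdisj hS (hA'mem (k-1) (by omega)) hvS (hvx ▸ hx1 (k-1) (by omega)))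
    · intro T hT
      rcases (hP'mem T).1 hT with ⟨hTP, _⟩ | ⟨k, hk, rfl⟩
      · exact hP.2.1 T hTP
      · exact hB_ge k hk
    · intro T hT
      rcases (hP'mem T).1 hT with ⟨hTP, _⟩ | ⟨k, hk, rfl⟩
      · exact ⟨center T, (hP.2.2 T hTP).1, (hP.2.2 T hTP).2⟩
      · refine ⟨center (A' k), hcB k hk, ?_⟩
        intro v hv hne
        rcases (hBmem k v).1 hv with ⟨hv1, _⟩ | ⟨hk0, hvx⟩
        · exact (hP.2.2 _ (hA'mem k hk)).2 v hv1 hne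
        · subst hvx
          have hk1 : k - 1 + 1 = k := by omega
          exact (hk1 ▸ hx3 (k-1) (by omega)).symm
  -- counting σ-stars
  have hP'le : ∀ T ∈ P', T.card ≤ σ + 1 := by
    intro T hT
    rcases (hP'mem T).1 hT with ⟨hTP, _⟩ | ⟨k, hk, rfl⟩
    · exact hPle T hTP
    · exact hB_le k hk
  have hP'zero : ∀ i, σ < i → starCounts P' i = 0 := by
    intro i hi
    rw [starCounts_def, Finset.card_eq_zero, Finset.filter_eq_empty_iff]
    intro T hT hc
    have := hP'le T hT
    omega
  have hPzero : ∀ i, σ < i → starCounts P i = 0 := by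
    intro i hi
    rw [starCounts_def, Finset.card_eq_zero, Finset.filter_eq_empty_iff]
    intro T hT hc
    have := hPle T hT
    omega
  obtain ⟨Φ, hΦ⟩ : ∃ Φ : Finset V → Finset V, ∀ T,
      Φ T = if h : ∃ k, k < r ∧ T = B k then A' h.choose else T := ⟨_, fun _ => rfl⟩
  have hA0mem : A' 0 ∈ P.filter (fun S => S.card = σ + 1) :=
    Finset.mem_filter.2 ⟨hA'mem 0 (by omega), hfirst'⟩
  have hmaps : ∀ T ∈ P'.filter (fun S => S.card = σ + 1),
      Φ T ∈ (P.filter (fun S => S.card = σ + 1)).erase (A' 0) := by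
    intro T hT
    obtain ⟨hT', hTcard⟩ := Finset.mem_filter.1 hT
    by_cases h : ∃ k, k < r ∧ T = B k
    · rw [hΦ T, dif_pos h]
      obtain ⟨hkr, hc2⟩ := h.choose_spec
      have hk0 : h.choose ≠ 0 := by
        intro h0
        rw [h0] at hc2
        rw [hc2, hcard0] at hTcard
        omega
      have hk1 : h.choose + 1 < r := by
        by_contra hh
        have he : h.choose = r - 1 := by omega
        rw [he] at hc2
        rw [hc2, hcardlast] at hTcard
        omega
      have hAc : (A' h.choose).card = σ + 1 := by
        rw [← hcardmid _ hk0 hk1, ← hc2]; exact hTcard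
      refine Finset.mem_erase.2 ⟨?_, Finset.mem_filter.2 ⟨hA'mem _ hkr, hAc⟩⟩
      intro he0
      exact hk0 (hA'inj _ 0 hkr (by omega) he0)
    · rw [hΦ T, dif_neg h]
      rcases (hP'mem T).1 hT' with ⟨hTP, hTpred⟩ | ⟨k, hk, rfl⟩
      · exact Finset.mem_erase.2 ⟨hTpred 0 (by omega), Finset.mem_filter.2 ⟨hTP, hTcard⟩⟩
      · exact absurd ⟨k, hk, rfl⟩ h
  have hinjOn : ∀ T₁ ∈ P'.filter (fun S => S.card = σ + 1),
      ∀ T₂ ∈ P'.filter (fun S => S.card = σ + 1), Φ T₁ = Φ T₂ → T₁ = T₂ := by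
    intro T₁ h1 T₂ h2 heq
    have hold : ∀ T, T ∈ P'.filter (fun S => S.card = σ + 1) →
        ¬(∃ k, k < r ∧ T = B k) → ∀ l, l < r → T ≠ A' l := by
      intro T hT hne
      rcases (hP'mem T).1 (Finset.mem_filter.1 hT).1 with ⟨_, hTpred⟩ | ⟨k, hk, rfl⟩
      · exact hTpred
      · exact absurd ⟨k, hk, rfl⟩ hne
    by_cases e1 : ∃ k, k < r ∧ T₁ = B k <;> by_cases e2 : ∃ k, k < r ∧ T₂ = B k
    · rw [hΦ T₁, dif_pos e1, hΦ T₂, dif_pos e2] at heq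
      have := hA'inj _ _ e1.choose_spec.1 e2.choose_spec.1 heq
      rw [e1.choose_spec.2, e2.choose_spec.2, this]
    · rw [hΦ T₁, dif_pos e1, hΦ T₂, dif_neg e2] at heq
      exact absurd heq.symm (hold T₂ h2 e2 _ e1.choose_spec.1)
    · rw [hΦ T₁, dif_neg e1, hΦ T₂, dif_pos e2] at heq
      exact absurd heq (hold T₁ h1 e1 _ e2.choose_spec.1)
    · rw [hΦ T₁, dif_neg e1, hΦ T₂, dif_neg e2] at heq
      exact heq
  have hfinal : starCounts P' σ < starCounts P σ := by
    rw [starCounts_def, starCounts_def]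
    calc (P'.filter (fun S => S.card = σ + 1)).card
        ≤ ((P.filter (fun S => S.card = σ + 1)).erase (A' 0)).card :=
          Finset.card_le_card_of_injOn Φ hmaps hinjOn
      _ < (P.filter (fun S => S.card = σ + 1)).card :=
          Finset.card_erase_lt_of_mem hA0mem
  rcases hopt P' hP'star with heq | ⟨i, hlt, hag⟩
  · rw [heq] at hfinal
    omega
  · rcases Nat.lt_trichotomy i σ with h | h | h
    · have := hag σ h
      omega
    · subst h
      omega
    · have h1 := hPzero i h
      have h2 := hP'zero i h
      omega
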